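/- Let κ be an uncountable regular cardinal with κ^{<κ}=κ. Every κ-λ-set A ⊆ 2^κ is perfectly κ-meagre: for every perfect set P ⊆ 2^κ, A ∩ P is κ-meagre relative to P. -/

import Mathlib

noncomputable section

open Cardinal Set

namespace GenSp

/-- The index set: a canonical type of order type `κ.ord`. -/
abbrev I (κ : Cardinal.{0}) : Type := κ.ord.ToType

variable (κ : Cardinal.{0}) (A : Type)

/-- The generalized space `A^κ`. -/
abbrev Sp : Type := I κ → A

/-- The basic clopen set `[x ↾ ξ]`: all functions agreeing with `x` below `ξ`. -/
def cyl (x : Sp κ A) (ξ : I κ) : Set (Sp κ A) := {y | ∀ β < ξ, y β = x β}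

/-- The bounded topology on `A^κ`, generated by the basic clopen sets. -/
def bt : TopologicalSpace (Sp κ A) :=
  .generateFrom {S | ∃ x ξ, S = cyl κ A x ξ}

/-- Open in the bounded topology. -/
def OpenK (s : Set (Sp κ A)) : Prop := @IsOpen _ (bt κ A) s

/-- Closed in the bounded topology. -/
def ClosedK (s : Set (Sp κ A)) : Prop := @IsClosed _ (bt κ A) s

/-- Nowhere dense in the bounded topology. -/
def NwdK (s : Set (Sp κ A)) : Prop := @IsNowhereDense _ (bt κ A) s

/-- κ-meagre: a union of (at most) κ nowhere dense sets. -/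
def MeagreK (s : Set (Sp κ A)) : Prop :=
  ∃ f : I κ → Set (Sp κ A), (∀ i, NwdK κ A (f i)) ∧ s = ⋃ i, f i

/-- κ-strongly null set. -/
def SNullK (S : Set (Sp κ A)) : Prop :=
  ∀ ξ : I κ → I κ, ∃ a : I κ → Sp κ A, S ⊆ ⋃ α, cyl κ A (a α) (ξ α)

/-- Coordinatewise addition over `ℤ₂` (translation by `x`). -/
def xadd (x y : Sp κ Bool) : Sp κ Bool := fun i => xor (x i) (y i)

/-- The covering number of the κ-meagre ideal. -/
def covM : Cardinal :=
  sInf {c | ∃ 𝒜 : Set (Set (Sp κ A)), #𝒜 = c ∧ (∀ s ∈ 𝒜, MeagreK κ A s) ∧ ⋃₀ 𝒜 = Set.univ}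

/-- The cofinality of the κ-meagre ideal. -/
def cofM : Cardinal :=
  sInf {c | ∃ 𝒜 : Set (Set (Sp κ A)), #𝒜 = c ∧ (∀ s ∈ 𝒜, MeagreK κ A s) ∧
    ∀ t, MeagreK κ A t → ∃ s ∈ 𝒜, t ⊆ s}

/-- κ is weakly compact: uncountable and with the partition property κ → (κ)²₂. -/
def IsWeaklyCompact (κ : Cardinal.{0}) : Prop :=
  ℵ₀ < κ ∧ ∀ c : I κ → I κ → Bool, ∃ H : Set (I κ), #H = κ ∧
    ∃ b : Bool, ∀ i ∈ H, ∀ j ∈ H, i < j → c i j = b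

/-- `S` is κ-meagre relative to `P` (in the subspace topology). -/
def MeagreInK (P S : Set (Sp κ A)) : Prop :=
  ∃ f : I κ → Set P,
    (∀ i, @IsNowhereDense _ (TopologicalSpace.induced Subtype.val (bt κ A)) (f i)) ∧
    {x : P | (x : Sp κ A) ∈ S} = ⋃ i, f i

/-- Perfect set in the bounded topology. -/
def PerfK (P : Set (Sp κ A)) : Prop := @Perfect _ (bt κ A) P

/-- Perfectly κ-meagre set. -/
def PMeagreK (S : Set (Sp κ A)) : Prop := ∀ P, PerfK κ A P → MeagreInK κ A P S

/-- κ-λ-set. -/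
def KLambdaSet (S : Set (Sp κ A)) : Prop :=
  ∀ B ⊆ S, #B ≤ κ → ∃ G : I κ → Set (Sp κ A),
    (∀ i, OpenK κ A (G i)) ∧ (⋂ i, G i) ∩ S = B

/-- κ-σ-set. -/
def KSigmaSet (S : Set (Sp κ A)) : Prop :=
  ∀ F : I κ → Set (Sp κ A), (∀ i, ClosedK κ A (F i)) →
    ∃ G : I κ → Set (Sp κ A), (∀ i, OpenK κ A (G i)) ∧
      S ∩ (⋃ i, F i) = S ∩ (⋂ i, G i)

/-- κ-γ-set: every open (proper) κ-cover contains a κ-γ-subcover of size κ. -/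
def KGammaSet (X : Set (Sp κ A)) : Prop :=
  ∀ 𝒰 : Set (Set (Sp κ A)), (∀ U ∈ 𝒰, OpenK κ A U) → X ∉ 𝒰 →
    (∀ C ⊆ X, #C < κ → ∃ U ∈ 𝒰, C ⊆ U) →
    ∃ U : I κ → Set (Sp κ A), (∀ α, U α ∈ 𝒰) ∧
      X ⊆ ⋃ α, ⋂ β, ⋂ (_ : α < β), U β

/-- A (proper) open cover of `X` of size κ, indexed by `I κ`. -/
def IsOCovSeq (X : Set (Sp κ A)) (U : I κ → Set (Sp κ A)) : Prop :=
  (∀ α, OpenK κ A (U α)) ∧ (∀ α, U α ≠ X) ∧ X ⊆ ⋃ α, U α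

/-- A (proper) κ-γ-cover of `X`, indexed by `I κ`. -/
def IsGammaCovSeq (X : Set (Sp κ A)) (U : I κ → Set (Sp κ A)) : Prop :=
  (∀ α, OpenK κ A (U α)) ∧ (∀ α, U α ≠ X) ∧
    X ⊆ ⋃ α, ⋂ β, ⋂ (_ : α < β), U β

/-- The cover `U` is essentially of size κ: no subfamily of size `< κ` covers `X`. -/
def EssK (X : Set (Sp κ A)) (U : I κ → Set (Sp κ A)) : Prop :=
  ∀ s : Set (I κ), #s < κ → ¬ X ⊆ ⋃ β ∈ s, U β

/-- The selection principle `S₁^κ(Γ_κ, Γ_κ)`. -/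
def S1GammaGamma (X : Set (Sp κ A)) : Prop :=
  ∀ 𝒰 : I κ → I κ → Set (Sp κ A), (∀ α, IsGammaCovSeq κ A X (𝒰 α)) →
    ∃ f : I κ → I κ, IsGammaCovSeq κ A X (fun α => 𝒰 α (f α))

/-- The κ-Hurewicz property `U^κ_{<κ}(O_κ, Γ_κ)`. -/
def KHurewicz (X : Set (Sp κ A)) : Prop :=
  ∀ 𝒰 : I κ → I κ → Set (Sp κ A), (∀ α, IsOCovSeq κ A X (𝒰 α)) →
    (∀ α, EssK κ A X (𝒰 α)) →
    ∃ V : I κ → Set (I κ), (∀ α, #(V α) < κ) ∧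
      IsGammaCovSeq κ A X (fun α => ⋃ β ∈ V α, 𝒰 α β)

/-- The κ-Menger property `U^κ_{<κ}(O_κ, O_κ)`. -/
def KMenger (X : Set (Sp κ A)) : Prop :=
  ∀ 𝒰 : I κ → I κ → Set (Sp κ A), (∀ α, IsOCovSeq κ A X (𝒰 α)) →
    (∀ α, EssK κ A X (𝒰 α)) →
    ∃ V : I κ → Set (I κ), (∀ α, #(V α) < κ) ∧
      IsOCovSeq κ A X (fun α => ⋃ β ∈ V α, 𝒰 α β)

/-- The κ-Rothberger property `S₁^κ(O_κ, O_κ)`. -/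
def KRothberger (X : Set (Sp κ A)) : Prop :=
  ∀ 𝒰 : I κ → I κ → Set (Sp κ A), (∀ α, IsOCovSeq κ A X (𝒰 α)) →
    ∃ f : I κ → I κ, IsOCovSeq κ A X (fun α => 𝒰 α (f α))

/-- Closed unbounded subset of `I κ`. -/
def IsClubK (S : Set (I κ)) : Prop :=
  (∀ a : I κ, ∃ b ∈ S, a < b) ∧
  (∀ a : I κ, (∃ b, b < a) → (∀ b < a, ∃ c ∈ S, b < c ∧ c < a) → a ∈ S)

/-- Stationary subset of `I κ`. -/
def IsStatK (S : Set (I κ)) : Prop :=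
  ∀ C : Set (I κ), IsClubK κ C → (S ∩ C).Nonempty

/-- The diamond principle `◇_κ(E)`. -/
def DiamondK (E : Set (I κ)) : Prop :=
  ∃ s : I κ → Set (I κ), (∀ α, s α ⊆ Iio α) ∧
    ∀ X : Set (I κ), IsStatK κ {α | α ∈ E ∧ X ∩ Iio α = s α}

/-- The guessing principle `◇_κ(E, 2^κ, NS_κ)`. -/
def DiamondFunK (E : Set (I κ)) : Prop :=
  ∃ s : I κ → Sp κ Bool,
    ∀ x : Sp κ Bool, IsStatK κ {α | α ∈ E ∧ ∀ β < α, x β = s α β}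

/-- `S` is `X`-small. -/
def XSmall (X : Set (I κ)) (S : Set (Sp κ A)) : Prop :=
  ∃ a : I κ → Sp κ A, S ⊆ ⋃ α ∈ X, cyl κ A (a α) α

/-- `S` is small in `A^κ`. -/
def SmallK (S : Set (Sp κ A)) : Prop :=
  ∃ lam : Cardinal, lam < κ ∧ ∀ α : I κ, ∃ T : Set (Sp κ A),
    #T ≤ lam ∧ S ⊆ ⋃ x ∈ T, cyl κ A x α


section Aux

variable {κ : Cardinal.{0}}

lemma mem_cyl_self (x : Sp κ Bool) (ξ : I κ) : x ∈ cyl κ Bool x ξ := fun _ _ => rfl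

lemma cyl_subset_cyl {x a : Sp κ Bool} {ξ : I κ} (h : x ∈ cyl κ Bool a ξ) :
    cyl κ Bool x ξ ⊆ cyl κ Bool a ξ := fun y hy β hβ => (hy β hβ).trans (h β hβ)

lemma cyl_mono {x : Sp κ Bool} {ξ ζ : I κ} (h : ξ ≤ ζ) :
    cyl κ Bool x ζ ⊆ cyl κ Bool x ξ := fun y hy β hβ => hy β (hβ.trans_le h)

lemma cyl_open (x : Sp κ Bool) (ξ : I κ) : OpenK κ Bool (cyl κ Bool x ξ) :=
  TopologicalSpace.GenerateOpen.basic _ ⟨x, ξ, rfl⟩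

lemma isBasis [Nonempty (I κ)] :
    @TopologicalSpace.IsTopologicalBasis _ (bt κ Bool) {S | ∃ x ξ, S = cyl κ Bool x ξ} := by
  letI := bt κ Bool
  constructor
  · rintro t₁ ⟨a, ξ, rfl⟩ t₂ ⟨b, ζ, rfl⟩ x ⟨hx1, hx2⟩
    exact ⟨cyl κ Bool x (max ξ ζ), ⟨x, max ξ ζ, rfl⟩, mem_cyl_self _ _,
      Set.subset_inter ((cyl_mono (le_max_left _ _)).trans (cyl_subset_cyl hx1))
        ((cyl_mono (le_max_right _ _)).trans (cyl_subset_cyl hx2))⟩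
  · apply Set.eq_univ_of_forall
    intro x
    obtain ⟨ξ⟩ := (inferInstance : Nonempty (I κ))
    exact ⟨cyl κ Bool x ξ, ⟨x, ξ, rfl⟩, mem_cyl_self _ _⟩
  · rfl

lemma exists_cyl_subset [Nonempty (I κ)] {U : Set (Sp κ Bool)} (hU : OpenK κ Bool U)
    {x : Sp κ Bool} (hx : x ∈ U) : ∃ ξ, cyl κ Bool x ξ ⊆ U := by
  letI := bt κ Bool
  obtain ⟨t, ⟨a, ξ, rfl⟩, hxt, htU⟩ := isBasis.exists_subset_of_mem_open hx hU
  exact ⟨ξ, (cyl_subset_cyl hxt).trans htU⟩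

lemma nwd_aux (hk : Cardinal.aleph0 < κ) {P S : Set (Sp κ Bool)} (hP : PerfK κ Bool P)
    {Q : Set (Sp κ Bool)} (hQsub : Q ⊆ S ∩ P)
    (hdense : S ∩ P ⊆ @closure _ (bt κ Bool) Q)
    {G : Set (Sp κ Bool)} (hG : OpenK κ Bool G) (hQG : Q ⊆ G)
    {w : Sp κ Bool} (hw : w ∈ Q) :
    @IsNowhereDense _ (TopologicalSpace.induced Subtype.val (bt κ Bool))
      ((Subtype.val ⁻¹' ({w} ∪ ((S ∩ P) \ G))) : Set P) := by
  letI := bt κ Bool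
  haveI : NoMaxOrder (I κ) := Cardinal.noMaxOrder hk.le
  haveI : Nonempty (I κ) := Ordinal.toType_nonempty_iff_ne_zero.2
    (by rw [Ne, Cardinal.ord_eq_zero]; exact (Cardinal.aleph0_pos.trans hk).ne')
  have hP' : @Perfect _ (bt κ Bool) P := hP
  set T : Set (Sp κ Bool) := {w} ∪ ((S ∩ P) \ G) with hTdef
  have hTsub : T ⊆ S ∩ P := by
    rintro y (rfl | hy)
    · exact hQsub hw
    · exact hy.1
  show interior (closure (Subtype.val ⁻¹' T)) = ∅
  rw [Set.eq_empty_iff_forall_notMem]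
  intro p hp
  obtain ⟨V, hVopen, hVeq⟩ := isOpen_induced_iff.1
    (isOpen_interior (s := closure ((Subtype.val ⁻¹' T : Set P))))
  have hpV : (p : Sp κ Bool) ∈ V := by rw [← hVeq] at hp; exact hp
  obtain ⟨ξ, hξ⟩ := exists_cyl_subset hVopen hpV
  have hclT : ∀ z : P, z ∈ closure ((Subtype.val ⁻¹' T : Set P)) →
      (z : Sp κ Bool) ∈ closure T := by
    intro z hz
    rw [closure_subtype] at hz
    exact closure_mono (Set.image_preimage_subset _ _) hz
  have hclQ : closure T ⊆ closure Q := by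
    have h1 : T ⊆ closure Q := fun y hy => hdense (hTsub hy)
    calc closure T ⊆ closure (closure Q) := closure_mono h1
      _ = closure Q := closure_closure
  have hpQ : (p : Sp κ Bool) ∈ closure Q := hclQ (hclT p (interior_subset hp))
  obtain ⟨r, hrc, hrQ⟩ := mem_closure_iff.1 hpQ _ (cyl_open (p : Sp κ Bool) ξ) (mem_cyl_self _ _)
  obtain ⟨ζ, hζ⟩ := exists_cyl_subset hG (hQG hrQ)
  have hWsubV : cyl κ Bool r (max ξ ζ) ⊆ V :=
    ((cyl_mono (le_max_left _ _)).trans (cyl_subset_cyl hrc)).trans hξ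
  have hWsubG : cyl κ Bool r (max ξ ζ) ⊆ G := (cyl_mono (le_max_right _ _)).trans hζ
  have hrP : r ∈ P := (hQsub hrQ).2
  obtain ⟨s, hsW, hsP, hsw⟩ : ∃ s, s ∈ cyl κ Bool r (max ξ ζ) ∧ s ∈ P ∧ s ≠ w := by
    by_cases hrw : r = w
    · have hacc := hP'.acc r hrP
      rw [accPt_iff_nhds] at hacc
      obtain ⟨y, ⟨hy1, hy2⟩, hy3⟩ := hacc _ ((cyl_open r (max ξ ζ)).mem_nhds (mem_cyl_self _ _))
      exact ⟨y, hy1, hy2, by rwa [hrw] at hy3⟩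
    · exact ⟨r, mem_cyl_self _ _, hrP, hrw⟩
  have hs1 : (⟨s, hsP⟩ : P) ∈ closure ((Subtype.val ⁻¹' T : Set P)) := by
    apply interior_subset
    rw [← hVeq]
    exact hWsubV hsW
  have hs2 : s ∈ closure T := hclT ⟨s, hsP⟩ hs1
  obtain ⟨j, hj⟩ : ∃ j, s j ≠ w j := by
    by_contra h
    push_neg at h
    exact hsw (funext h)
  obtain ⟨ξ', hξ'⟩ := exists_gt (max (max ξ ζ) j)
  obtain ⟨y, hyO, hyT⟩ := mem_closure_iff.1 hs2 _ (cyl_open s ξ') (mem_cyl_self _ _)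
  have hOsubW : cyl κ Bool s ξ' ⊆ cyl κ Bool r (max ξ ζ) :=
    (cyl_mono ((le_max_left _ _).trans hξ'.le)).trans (cyl_subset_cyl hsW)
  rcases hyT with hyw | hyg
  · rw [Set.mem_singleton_iff] at hyw
    subst hyw
    exact hj (hyO j ((le_max_right _ _).trans_lt hξ')).symm
  · exact hyg.2 (hWsubG (hOsubW hyO))

end Aux


theorem stmt10 (κ : Cardinal.{0}) (hk : Cardinal.aleph0 < κ) (hreg : κ.IsRegular) (hpow : κ ^< κ = κ)
    (S : Set (Sp κ Bool)) (hS : KLambdaSet κ Bool S) :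
    PMeagreK κ Bool S := by
  intro P hP
  classical
  letI := bt κ Bool
  haveI : NoMaxOrder (I κ) := Cardinal.noMaxOrder hk.le
  haveI hneI : Nonempty (I κ) := Ordinal.toType_nonempty_iff_ne_zero.2
    (by rw [Ne, Cardinal.ord_eq_zero]; exact (Cardinal.aleph0_pos.trans hk).ne')
  rcases Set.eq_empty_or_nonempty (S ∩ P) with hSP | hSP
  · refine ⟨fun _ => ∅, fun _ => isNowhereDense_empty, ?_⟩
    ext x
    simp only [Set.mem_setOf_eq, Set.iUnion_empty, Set.mem_empty_iff_false, iff_false]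
    intro hxS
    have hx : (x : Sp κ Bool) ∈ S ∩ P := ⟨hxS, x.2⟩
    rw [hSP] at hx
    exact hx
  · obtain ⟨y₀, hy₀⟩ := hSP
    set Cset : (Σ ξ : I κ, (↥(Iio ξ) → Bool)) → Set (Sp κ Bool) :=
      fun j => {y | ∀ β (hβ : β < j.1), y β = j.2 ⟨β, hβ⟩} with hCset
    set d : (Σ ξ : I κ, (↥(Iio ξ) → Bool)) → Sp κ Bool :=
      fun j => if h : (S ∩ P ∩ Cset j).Nonempty then h.choose else y₀ with hd
    have hdmem : ∀ j, d j ∈ S ∩ P := by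
      intro j
      by_cases h : (S ∩ P ∩ Cset j).Nonempty
      · simp only [hd, dif_pos h]; exact h.choose_spec.1
      · simp only [hd, dif_neg h]; exact hy₀
    set Q : Set (Sp κ Bool) := Set.range d with hQ
    have hQsub : Q ⊆ S ∩ P := by rintro _ ⟨j, rfl⟩; exact hdmem j
    have hJcard : #(Σ ξ : I κ, (↥(Iio ξ) → Bool)) ≤ κ := by
      have h2κ : (2 : Cardinal) ≤ κ := ((Cardinal.nat_lt_aleph0 2).trans_le hk.le).le.trans'
        (by norm_num)
      calc #(Σ ξ : I κ, (↥(Iio ξ) → Bool)) = Cardinal.sum (fun ξ : I κ => #(↥(Iio ξ) → Bool)) :=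
            Cardinal.mk_sigma _
        _ ≤ Cardinal.sum (fun _ : I κ => κ) := by
            refine Cardinal.sum_le_sum _ _ (fun ξ => ?_)
            calc #(↥(Iio ξ) → Bool) = (2 : Cardinal) ^ #(↥(Iio ξ)) := by
                  rw [Cardinal.mk_arrow, Cardinal.mk_bool, Cardinal.lift_id, Cardinal.lift_id]
              _ ≤ κ ^ #(↥(Iio ξ)) := Cardinal.power_le_power_right h2κ
              _ ≤ κ ^< κ := Cardinal.le_powerlt κ (Cardinal.mk_Iio_ord_toType ξ)
              _ = κ := hpow
        _ = #(I κ) * κ := Cardinal.sum_const' _ _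
        _ = κ * κ := by rw [Cardinal.mk_toType, Cardinal.card_ord]
        _ = κ := Cardinal.mul_eq_self hk.le
    have hQcard : #Q ≤ κ := Cardinal.mk_range_le.trans hJcard
    have hQdense : S ∩ P ⊆ closure Q := by
      intro y hy
      rw [mem_closure_iff]
      intro o ho hyo
      obtain ⟨ξ, hξ⟩ := exists_cyl_subset ho hyo
      set j : (Σ ξ : I κ, (↥(Iio ξ) → Bool)) := ⟨ξ, fun β => y β.1⟩ with hjdef
      have hnon : (S ∩ P ∩ Cset j).Nonempty := ⟨y, hy, fun β hβ => rfl⟩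
      have hdj : d j ∈ S ∩ P ∩ Cset j := by
        simp only [hd, dif_pos hnon]; exact hnon.choose_spec
      exact ⟨d j, hξ (fun β hβ => hdj.2 β hβ), ⟨j, rfl⟩⟩
    obtain ⟨G, hGopen, hGint⟩ := hS Q (fun x hx => (hQsub hx).1) hQcard
    have hQG : ∀ i, Q ⊆ G i := by
      intro i x hx
      rw [← hGint] at hx
      exact Set.mem_iInter.1 hx.1 i
    have hQne : Q.Nonempty := ⟨d ⟨Classical.arbitrary (I κ), fun _ => false⟩, _, rfl⟩
    have hQle : #Q ≤ #(I κ) := by rwa [Cardinal.mk_toType, Cardinal.card_ord]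
    obtain ⟨e⟩ := (Cardinal.le_def _ _).1 hQle
    obtain ⟨b₀, hb₀⟩ := hQne
    set q : I κ → Sp κ Bool := fun i => if h : ∃ b : Q, e b = i then ↑h.choose else b₀ with hq
    have hqQ : ∀ i, q i ∈ Q := by
      intro i
      by_cases h : ∃ b : Q, e b = i
      · simp only [hq, dif_pos h]; exact h.choose.2
      · simp only [hq, dif_neg h]; exact hb₀
    have hQq : ∀ x ∈ Q, ∃ i, q i = x := by
      intro x hx
      refine ⟨e ⟨x, hx⟩, ?_⟩
      have h : ∃ b : Q, e b = e ⟨x, hx⟩ := ⟨⟨x, hx⟩, rfl⟩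
      simp only [hq, dif_pos h]
      exact congrArg Subtype.val (e.injective h.choose_spec)
    refine ⟨fun i => Subtype.val ⁻¹' ({q i} ∪ ((S ∩ P) \ G i)),
      fun i => nwd_aux hk hP hQsub hQdense (hGopen i) (hQG i) (hqQ i), ?_⟩
    ext x
    simp only [Set.mem_setOf_eq, Set.mem_iUnion, Set.mem_preimage, Set.mem_union,
      Set.mem_singleton_iff, Set.mem_diff]
    constructor
    · intro hxS
      by_cases hall : ∀ i, (x : Sp κ Bool) ∈ G i
      · have hxQ : (x : Sp κ Bool) ∈ Q := by
          rw [← hGint]; exact ⟨Set.mem_iInter.2 hall, hxS⟩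
        obtain ⟨i, hi⟩ := hQq _ hxQ
        exact ⟨i, Or.inl hi.symm⟩
      · push_neg at hall
        obtain ⟨i, hi⟩ := hall
        exact ⟨i, Or.inr ⟨⟨hxS, x.2⟩, hi⟩⟩
    · rintro ⟨i, hi | hi⟩
      · have hqi : q i ∈ S := (hQsub (hqQ i)).1
        rw [hi]; exact hqi
      · exact hi.1.1


end GenSp
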